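/- (Type-2 Gumbel mixture of Hüsler–Reiss distributions.) For every b > 0 and all x, y ∈ ℝ, ∫_0^∞ [Φ(λ + (y−x)/(2λ)) e^{−x} + Φ(λ + (x−y)/(2λ)) e^{−y}] · 2b λ^{−3} e^{−b/λ²} dλ = e^{−x} + e^{−y} − e^{−(x+y)/2} · e^{−√(((y−x)/2)² + 2b)}. -/

import Mathlib

open MeasureTheory Filter Real Set
open scoped Topology

/-- Standard normal density. -/
noncomputable def stdPdf (t : ℝ) : ℝ := (Real.sqrt (2 * Real.pi))⁻¹ * Real.exp (-(t ^ 2) / 2)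

/-- Standard normal CDF. -/
noncomputable def stdCdf (x : ℝ) : ℝ := ∫ t in Set.Iic x, stdPdf t

lemma stdPdf_nonneg (t : ℝ) : 0 ≤ stdPdf t := by
  unfold stdPdf; positivity

lemma continuous_stdPdf : Continuous stdPdf := by
  unfold stdPdf; continuity

lemma integrable_stdPdf : Integrable stdPdf := by
  have h : Integrable (fun t : ℝ => Real.exp (-(1/2 : ℝ) * t ^ 2)) := integrable_exp_neg_mul_sq (by norm_num)
  have : stdPdf = fun t => (Real.sqrt (2 * Real.pi))⁻¹ * Real.exp (-(1/2 : ℝ) * t ^ 2) := by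
    funext t; unfold stdPdf; ring_nf
  rw [this]
  exact h.const_mul _

lemma integral_stdPdf : ∫ t, stdPdf t = 1 := by
  unfold stdPdf
  rw [integral_const_mul]
  have : ∀ t : ℝ, Real.exp (-(t ^ 2) / 2) = Real.exp (-(1/2 : ℝ) * t ^ 2) := fun t => by ring_nf
  simp_rw [this]
  rw [integral_gaussian]
  rw [inv_mul_eq_one₀]
  · rw [show (π : ℝ) / (1/2) = 2 * π by ring]
  · positivity

lemma stdCdf_nonneg (x : ℝ) : 0 ≤ stdCdf x :=
  setIntegral_nonneg measurableSet_Iic fun t _ => stdPdf_nonneg t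

lemma stdCdf_le_one (x : ℝ) : stdCdf x ≤ 1 := by
  rw [← integral_stdPdf]
  exact setIntegral_le_integral integrable_stdPdf (Eventually.of_forall stdPdf_nonneg)

lemma hasDerivAt_stdCdf (t : ℝ) : HasDerivAt stdCdf (stdPdf t) t := by
  have heq : ∀ u : ℝ, stdCdf u = stdCdf 0 + ∫ s in (0:ℝ)..u, stdPdf s := by
    intro u
    have h := intervalIntegral.integral_Iic_sub_Iic
      (integrable_stdPdf.integrableOn (s := Iic (0:ℝ)))
      (integrable_stdPdf.integrableOn (s := Iic u))
    unfold stdCdf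
    linarith
  have h : HasDerivAt (fun u => stdCdf 0 + ∫ s in (0:ℝ)..u, stdPdf s) (stdPdf t) t := by
    apply HasDerivAt.const_add
    exact intervalIntegral.integral_hasDerivAt_right
      (continuous_stdPdf.intervalIntegrable _ _)
      (continuous_stdPdf.stronglyMeasurableAtFilter _ _)
      continuous_stdPdf.continuousAt
  exact h.congr_of_eventuallyEq (Eventually.of_forall heq)

lemma tendsto_stdCdf_atTop : Tendsto stdCdf atTop (𝓝 1) := by
  have heq : ∀ u : ℝ, stdCdf u = stdCdf 0 + ∫ s in (0:ℝ)..u, stdPdf s := by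
    intro u
    have h := intervalIntegral.integral_Iic_sub_Iic
      (integrable_stdPdf.integrableOn (s := Iic (0:ℝ)))
      (integrable_stdPdf.integrableOn (s := Iic u))
    unfold stdCdf
    linarith
  have h := MeasureTheory.intervalIntegral_tendsto_integral_Ioi (0:ℝ)
    (integrable_stdPdf.integrableOn (s := Ioi 0)) tendsto_id
  have h2 : Tendsto (fun u : ℝ => stdCdf 0 + ∫ s in (0:ℝ)..u, stdPdf s) atTop
      (𝓝 (stdCdf 0 + ∫ s in Ioi (0:ℝ), stdPdf s)) := (tendsto_const_nhds.add h)
  have hval : stdCdf 0 + ∫ s in Ioi (0:ℝ), stdPdf s = 1 := by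
    rw [← integral_stdPdf]
    unfold stdCdf
    rw [← setIntegral_union (by simp) measurableSet_Ioi integrable_stdPdf.integrableOn
      integrable_stdPdf.integrableOn, Iic_union_Ioi, setIntegral_univ]
  rw [← hval]
  exact h2.congr fun u => (heq u).symm

lemma tendsto_stdCdf_atBot : Tendsto stdCdf atBot (𝓝 0) := by
  have h := MeasureTheory.intervalIntegral_tendsto_integral_Iic (0:ℝ)
    (integrable_stdPdf.integrableOn (s := Iic 0)) tendsto_id
  have heq : ∀ u : ℝ, stdCdf u = stdCdf 0 - ∫ s in u..(0:ℝ), stdPdf s := by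
    intro u
    have h := intervalIntegral.integral_Iic_sub_Iic
      (integrable_stdPdf.integrableOn (s := Iic u))
      (integrable_stdPdf.integrableOn (s := Iic (0:ℝ)))
    unfold stdCdf
    linarith
  have h2 : Tendsto (fun u : ℝ => stdCdf 0 - ∫ s in u..(0:ℝ), stdPdf s) atBot
      (𝓝 (stdCdf 0 - ∫ s in Iic (0:ℝ), stdPdf s)) := tendsto_const_nhds.sub h
  have : stdCdf 0 - ∫ s in Iic (0:ℝ), stdPdf s = 0 := by unfold stdCdf; ring
  rw [← this]
  exact h2.congr fun u => (heq u).symm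

lemma expo1 (a b c l : ℝ) (hl : l ≠ 0) (hc2 : c^2 = a^2 + 2*b) :
    a + -((l + a/l)^2)/2 + -b/l^2 = -c + -((l - c/l)^2)/2 := by
  field_simp
  ring_nf
  linear_combination hc2

lemma keyE1 (a b c l : ℝ) (hl : l ≠ 0) (hc2 : c^2 = a^2 + 2*b) :
    Real.exp a * stdPdf (l + a/l) * Real.exp (-b/l^2)
      = Real.exp (-c) * stdPdf (l - c/l) := by
  unfold stdPdf
  rw [show Real.exp a * ((Real.sqrt (2*π))⁻¹ * Real.exp (-((l + a/l)^2)/2)) * Real.exp (-b/l^2)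
      = (Real.sqrt (2*π))⁻¹ * Real.exp (a + -((l + a/l)^2)/2 + -b/l^2) by
    rw [Real.exp_add, Real.exp_add]; ring]
  rw [show Real.exp (-c) * ((Real.sqrt (2*π))⁻¹ * Real.exp (-((l - c/l)^2)/2))
      = (Real.sqrt (2*π))⁻¹ * Real.exp (-c + -((l - c/l)^2)/2) by
    rw [Real.exp_add]; ring]
  rw [expo1 a b c l hl hc2]

lemma stdPdf_neg (t : ℝ) : stdPdf (-t) = stdPdf t := by unfold stdPdf; ring_nf

lemma keyE2 (a b c l : ℝ) (hl : l ≠ 0) (hc2 : c^2 = a^2 + 2*b) :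
    Real.exp (-a) * stdPdf (l - a/l) * Real.exp (-b/l^2)
      = Real.exp c * stdPdf (-l - c/l) := by
  have h := keyE1 (-a) b (-c) l hl (by linear_combination hc2)
  rw [show l + (-a)/l = l - a/l by ring] at h
  rw [show l - (-c)/l = l + c/l by ring] at h
  rw [neg_neg] at h
  rw [h, show (-l - c/l : ℝ) = -(l + c/l) by ring, stdPdf_neg]

lemma keyE3 (c l : ℝ) (hl : l ≠ 0) :
    Real.exp (-c) * stdPdf (l - c/l) = Real.exp c * stdPdf (-l - c/l) := by
  unfold stdPdf
  rw [show Real.exp (-c) * ((Real.sqrt (2*π))⁻¹ * Real.exp (-((l - c/l)^2)/2))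
      = (Real.sqrt (2*π))⁻¹ * Real.exp (-c + -((l - c/l)^2)/2) by
    rw [Real.exp_add]; ring]
  rw [show Real.exp c * ((Real.sqrt (2*π))⁻¹ * Real.exp (-((-l - c/l)^2)/2))
      = (Real.sqrt (2*π))⁻¹ * Real.exp (c + -((-l - c/l)^2)/2) by
    rw [Real.exp_add]; ring]
  congr 1
  field_simp
  ring

lemma hasDerivAt_aux1 (r : ℝ) {l : ℝ} (hl : l ≠ 0) :
    HasDerivAt (fun u : ℝ => u + r / u) (1 - r / l ^ 2) l := by
  have h := (hasDerivAt_id l).add ((hasDerivAt_inv hl).const_mul r)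
  have heq : (fun u : ℝ => id u + r * u⁻¹) = fun u : ℝ => u + r / u := by
    funext u; simp [div_eq_mul_inv]
  simp only [Pi.add_def] at h
  rw [heq] at h
  refine h.congr_deriv ?_
  field_simp
  ring

lemma hasDerivAt_aux2 (r : ℝ) {l : ℝ} (hl : l ≠ 0) :
    HasDerivAt (fun u : ℝ => -u - r / u) (-1 + r / l ^ 2) l := by
  have h := ((hasDerivAt_id l).neg).sub ((hasDerivAt_inv hl).const_mul r)
  have heq : (fun u : ℝ => -(id u) - r * u⁻¹) = fun u : ℝ => -u - r / u := by
    funext u; simp [div_eq_mul_inv]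
  simp only [Pi.sub_def, Pi.neg_def] at h
  rw [heq] at h
  refine h.congr_deriv ?_
  field_simp
  ring

lemma hasDerivAt_aux3 (b : ℝ) {l : ℝ} (hl : l ≠ 0) :
    HasDerivAt (fun u : ℝ => Real.exp (-b / u ^ 2))
      (Real.exp (-b / l ^ 2) * (2 * b / l ^ 3)) l := by
  have hsq : HasDerivAt (fun u : ℝ => u ^ 2) (2 * l) l := by
    simpa using hasDerivAt_pow 2 l
  have hinv := hsq.inv (pow_ne_zero 2 hl)
  have h := ((hinv.const_mul (-b)).exp)
  have heq : (fun u : ℝ => Real.exp (-b * (u ^ 2)⁻¹)) = fun u : ℝ => Real.exp (-b / u ^ 2) := by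
    funext u; rw [div_eq_mul_inv]
  simp only [Pi.inv_apply] at h
  rw [heq] at h
  refine h.congr_deriv ?_
  rw [div_eq_mul_inv (-b : ℝ)]
  field_simp

set_option maxHeartbeats 4000000 in
/-- **Type-2 Gumbel mixture of Hüsler–Reiss distributions.** -/
theorem stmt9 (b : ℝ) (hb : 0 < b) (x y : ℝ) :
    ∫ l in Set.Ioi (0 : ℝ),
        (stdCdf (l + (y - x) / (2 * l)) * Real.exp (-x)
          + stdCdf (l + (x - y) / (2 * l)) * Real.exp (-y))
          * (2 * b * l ^ (-3 : ℤ) * Real.exp (-b / l ^ 2))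
      = Real.exp (-x) + Real.exp (-y)
        - Real.exp (-((x + y) / 2)) * Real.exp (-Real.sqrt (((y - x) / 2) ^ 2 + 2 * b)) := by
  obtain ⟨a, ha⟩ : ∃ a : ℝ, a = (y - x) / 2 := ⟨_, rfl⟩
  rw [← ha]
  have hab : (0:ℝ) < a ^ 2 + 2 * b := by positivity
  obtain ⟨c, hcdef⟩ : ∃ c : ℝ, c = Real.sqrt (a ^ 2 + 2 * b) := ⟨_, rfl⟩
  rw [← hcdef]
  have hc2 : c ^ 2 = a ^ 2 + 2 * b := by rw [hcdef]; exact Real.sq_sqrt hab.le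
  have hc0 : 0 < c := by rw [hcdef]; exact Real.sqrt_pos.mpr hab
  obtain ⟨s, hs⟩ : ∃ s : ℝ, s = (x + y) / 2 := ⟨_, rfl⟩
  rw [← hs]
  -- the antiderivative on (0, ∞)
  set G : ℝ → ℝ := fun l =>
    Real.exp (-s) * ((Real.exp a * stdCdf (l + a / l) + Real.exp (-a) * stdCdf (l - a / l))
      * Real.exp (-b / l ^ 2)
      - (Real.exp (-c) * stdCdf (l - c / l) - Real.exp c * stdCdf (-l - c / l))) with hG
  set F : ℝ → ℝ := fun l => if l ≤ 0 then 0 else G l with hF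
  have hF0 : F 0 = 0 := by simp [hF]
  have hFG : ∀ l : ℝ, 0 < l → F l = G l := by
    intro l hl; simp [hF, not_le.mpr hl]
  have hxs : Real.exp (-s) * Real.exp a = Real.exp (-x) := by
    rw [← Real.exp_add]; congr 1; rw [hs, ha]; ring
  have hys : Real.exp (-s) * Real.exp (-a) = Real.exp (-y) := by
    rw [← Real.exp_add]; congr 1; rw [hs, ha]; ring
  -- derivative
  have hderiv : ∀ l ∈ Ioi (0:ℝ), HasDerivAt F
      ((stdCdf (l + (y - x) / (2 * l)) * Real.exp (-x)
          + stdCdf (l + (x - y) / (2 * l)) * Real.exp (-y))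
          * (2 * b * l ^ (-3 : ℤ) * Real.exp (-b / l ^ 2))) l := by
    intro l hl
    replace hl : 0 < l := hl
    have hl0 : l ≠ 0 := hl.ne'
    have dc1 : HasDerivAt (fun u => stdCdf (u + a / u))
        (stdPdf (l + a / l) * (1 - a / l ^ 2)) l :=
      (hasDerivAt_stdCdf _).comp l (hasDerivAt_aux1 a hl0)
    have dc2 : HasDerivAt (fun u => stdCdf (u - a / u))
        (stdPdf (l - a / l) * (1 + a / l ^ 2)) l := by
      have := (hasDerivAt_stdCdf (l + (-a) / l)).comp l (hasDerivAt_aux1 (-a) hl0)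
      simp only [Function.comp_def] at this
      have heq : (fun u : ℝ => stdCdf (u + (-a) / u)) = fun u => stdCdf (u - a / u) := by
        funext u; rw [show u + (-a) / u = u - a / u by ring]
      rw [heq, show l + (-a)/l = l - a/l by ring] at this
      refine this.congr_deriv ?_
      ring
    have dc3 : HasDerivAt (fun u => stdCdf (u - c / u))
        (stdPdf (l - c / l) * (1 + c / l ^ 2)) l := by
      have := (hasDerivAt_stdCdf (l + (-c) / l)).comp l (hasDerivAt_aux1 (-c) hl0)
      simp only [Function.comp_def] at this
      have heq : (fun u : ℝ => stdCdf (u + (-c) / u)) = fun u => stdCdf (u - c / u) := by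
        funext u; rw [show u + (-c) / u = u - c / u by ring]
      rw [heq, show l + (-c)/l = l - c/l by ring] at this
      refine this.congr_deriv ?_
      ring
    have dc4 : HasDerivAt (fun u => stdCdf (-u - c / u))
        (stdPdf (-l - c / l) * (-1 + c / l ^ 2)) l :=
      (hasDerivAt_stdCdf _).comp l (hasDerivAt_aux2 c hl0)
    have dW := hasDerivAt_aux3 b hl0
    have dP := (dc1.const_mul (Real.exp a)).add (dc2.const_mul (Real.exp (-a)))
    have dPW := dP.mul dW
    have dQ := (dc3.const_mul (Real.exp (-c))).sub (dc4.const_mul (Real.exp c))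
    have dG := (dPW.sub dQ).const_mul (Real.exp (-s))
    have hFGev : (fun u => Real.exp (-s) *
        ((Real.exp a * stdCdf (u + a / u) + Real.exp (-a) * stdCdf (u - a / u))
          * Real.exp (-b / u ^ 2)
          - (Real.exp (-c) * stdCdf (u - c / u) - Real.exp c * stdCdf (-u - c / u)))) =ᶠ[𝓝 l] F := by
      filter_upwards [eventually_gt_nhds hl] with u hu
      rw [hFG u hu, hG]
    have dF := dG.congr_of_eventuallyEq hFGev.symm
    refine dF.congr_deriv ?_
    symm
    simp only [Pi.add_apply]
    have E1 := keyE1 a b c l hl0 hc2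
    have E2 := keyE2 a b c l hl0 hc2
    have E3 := keyE3 c l hl0
    have harg1 : l + (y - x) / (2 * l) = l + a / l := by rw [ha]; ring
    have harg2 : l + (x - y) / (2 * l) = l - a / l := by rw [ha]; ring
    have hzp : (l:ℝ) ^ (-3 : ℤ) = (l ^ 3)⁻¹ := by
      rw [zpow_neg, zpow_ofNat]
    rw [harg1, harg2, hzp]
    linear_combination
      - (2*b*Real.exp (-b/l^2)/l^3 * stdCdf (l + a/l)) * hxs
      - (2*b*Real.exp (-b/l^2)/l^3 * stdCdf (l - a/l)) * hys
      - (Real.exp (-s) * (1 - a/l^2)) * E1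
      - (Real.exp (-s) * (1 + a/l^2)) * E2
      + (Real.exp (-s) * (a+c)/l^2) * E3
  -- nonnegativity of the integrand
  have hpos : ∀ l ∈ Ioi (0:ℝ), 0 ≤ (stdCdf (l + (y - x) / (2 * l)) * Real.exp (-x)
        + stdCdf (l + (x - y) / (2 * l)) * Real.exp (-y))
        * (2 * b * l ^ (-3 : ℤ) * Real.exp (-b / l ^ 2)) := by
    intro l hl
    have hl' : (0:ℝ) < l := hl
    apply mul_nonneg
    · exact add_nonneg (mul_nonneg (stdCdf_nonneg _) (Real.exp_pos _).le)
        (mul_nonneg (stdCdf_nonneg _) (Real.exp_pos _).le)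
    · exact mul_nonneg (mul_nonneg (by positivity) (zpow_nonneg hl'.le _)) (Real.exp_pos _).le
  -- limits of auxiliary maps at infinity
  have hdiv0 : ∀ r : ℝ, Tendsto (fun l : ℝ => r / l) atTop (𝓝 0) := by
    intro r
    have := tendsto_inv_atTop_zero.const_mul r
    rw [mul_zero] at this
    simpa [div_eq_mul_inv] using this
  have argTop : ∀ r : ℝ, Tendsto (fun l : ℝ => l + r / l) atTop atTop := fun r =>
    Filter.Tendsto.atTop_add tendsto_id (hdiv0 r)
  have argTop' : ∀ r : ℝ, Tendsto (fun l : ℝ => l - r / l) atTop atTop := by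
    intro r
    have := argTop (-r)
    simpa [neg_div, sub_eq_add_neg] using this
  have argBot : Tendsto (fun l : ℝ => -l - c / l) atTop atBot := by
    have h1 : Tendsto (fun l : ℝ => -l) atTop atBot := tendsto_neg_atTop_atBot
    have h2 : Tendsto (fun l : ℝ => -(c / l)) atTop (𝓝 0) := by
      simpa using (hdiv0 c).neg
    have := Filter.Tendsto.atBot_add h1 h2
    simpa [sub_eq_add_neg] using this
  have limWtop : Tendsto (fun l : ℝ => Real.exp (-b / l ^ 2)) atTop (𝓝 1) := by
    have h1 : Tendsto (fun l : ℝ => -b / l ^ 2) atTop (𝓝 0) := by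
      have hp : Tendsto (fun l : ℝ => l ^ 2) atTop atTop := tendsto_pow_atTop two_ne_zero
      have h2 := (tendsto_inv_atTop_zero.comp hp).const_mul (-b)
      rw [mul_zero] at h2
      simpa [div_eq_mul_inv, Function.comp_def] using h2
    have := (Real.continuous_exp.tendsto 0).comp h1
    simpa [Function.comp_def] using this
  have s1 : Tendsto (fun l : ℝ => stdCdf (l + a / l)) atTop (𝓝 1) := by
    have := tendsto_stdCdf_atTop.comp (argTop a)
    simpa [Function.comp_def] using this
  have s2 : Tendsto (fun l : ℝ => stdCdf (l - a / l)) atTop (𝓝 1) := by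
    have := tendsto_stdCdf_atTop.comp (argTop' a)
    simpa [Function.comp_def] using this
  have s3 : Tendsto (fun l : ℝ => stdCdf (l - c / l)) atTop (𝓝 1) := by
    have := tendsto_stdCdf_atTop.comp (argTop' c)
    simpa [Function.comp_def] using this
  have s4 : Tendsto (fun l : ℝ => stdCdf (-l - c / l)) atTop (𝓝 0) := by
    have := tendsto_stdCdf_atBot.comp argBot
    simpa [Function.comp_def] using this
  have htopG : Tendsto G atTop (𝓝 (Real.exp (-s) * ((Real.exp a * 1 + Real.exp (-a) * 1) * 1
      - (Real.exp (-c) * 1 - Real.exp c * 0)))) := by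
    rw [hG]
    exact ((((s1.const_mul (Real.exp a)).add (s2.const_mul (Real.exp (-a)))).mul limWtop).sub
      ((s3.const_mul (Real.exp (-c))).sub (s4.const_mul (Real.exp c)))).const_mul (Real.exp (-s))
  have htopF : Tendsto F atTop (𝓝 (Real.exp (-s) * ((Real.exp a * 1 + Real.exp (-a) * 1) * 1
      - (Real.exp (-c) * 1 - Real.exp c * 0)))) := by
    apply htopG.congr'
    filter_upwards [eventually_gt_atTop (0:ℝ)] with u hu
    rw [hFG u hu]
  -- continuity within [0, ∞) at 0
  have hsq : Tendsto (fun l : ℝ => l ^ 2) (𝓝[>] (0:ℝ)) (𝓝[>] (0:ℝ)) := by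
    rw [tendsto_nhdsWithin_iff]
    constructor
    · have : Tendsto (fun l : ℝ => l ^ 2) (𝓝 (0:ℝ)) (𝓝 ((0:ℝ) ^ 2)) :=
        (continuous_pow 2).tendsto (0:ℝ)
      rw [show ((0:ℝ) ^ 2) = 0 by norm_num] at this
      exact this.mono_left nhdsWithin_le_nhds
    · filter_upwards [self_mem_nhdsWithin] with u hu
      exact pow_pos (mem_Ioi.mp hu) 2
  have hW0 : Tendsto (fun l : ℝ => Real.exp (-b / l ^ 2)) (𝓝[>] (0:ℝ)) (𝓝 0) := by
    have h1 : Tendsto (fun l : ℝ => b * (l ^ 2)⁻¹) (𝓝[>] (0:ℝ)) atTop :=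
      (tendsto_inv_nhdsGT_zero.comp hsq).const_mul_atTop hb
    have h2 : Tendsto (fun l : ℝ => -b / l ^ 2) (𝓝[>] (0:ℝ)) atBot := by
      have := tendsto_neg_atTop_atBot.comp h1
      simpa [div_eq_mul_inv, Function.comp_def, neg_mul] using this
    have := Real.tendsto_exp_atBot.comp h2
    simpa [Function.comp_def] using this
  have hinv0 : ∀ r : ℝ, 0 < r → Tendsto (fun l : ℝ => l - r / l) (𝓝[>] (0:ℝ)) atBot := by
    intro r hr
    have h1 : Tendsto (fun l : ℝ => -(r / l)) (𝓝[>] (0:ℝ)) atBot := by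
      have := tendsto_neg_atTop_atBot.comp ((tendsto_inv_nhdsGT_zero.const_mul_atTop hr))
      simpa [div_eq_mul_inv, Function.comp_def] using this
    have h2 : Tendsto (fun l : ℝ => l) (𝓝[>] (0:ℝ)) (𝓝 0) :=
      tendsto_id.mono_left nhdsWithin_le_nhds
    have := Filter.Tendsto.add_atBot h2 h1
    simpa [sub_eq_add_neg] using this
  have hinv0' : Tendsto (fun l : ℝ => -l - c / l) (𝓝[>] (0:ℝ)) atBot := by
    have h1 : Tendsto (fun l : ℝ => -(c / l)) (𝓝[>] (0:ℝ)) atBot := by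
      have := tendsto_neg_atTop_atBot.comp ((tendsto_inv_nhdsGT_zero.const_mul_atTop hc0))
      simpa [div_eq_mul_inv, Function.comp_def] using this
    have h2 : Tendsto (fun l : ℝ => -l) (𝓝[>] (0:ℝ)) (𝓝 0) := by
      have : Tendsto (fun l : ℝ => -l) (𝓝 (0:ℝ)) (𝓝 (-0)) := (continuous_neg).tendsto (0:ℝ)
      rw [neg_zero] at this
      exact this.mono_left nhdsWithin_le_nhds
    have := Filter.Tendsto.add_atBot h2 h1
    simpa [sub_eq_add_neg] using this
  have hQ1 : Tendsto (fun l : ℝ => stdCdf (l - c / l)) (𝓝[>] (0:ℝ)) (𝓝 0) := by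
    have := tendsto_stdCdf_atBot.comp (hinv0 c hc0)
    simpa [Function.comp_def] using this
  have hQ2 : Tendsto (fun l : ℝ => stdCdf (-l - c / l)) (𝓝[>] (0:ℝ)) (𝓝 0) := by
    have := tendsto_stdCdf_atBot.comp hinv0'
    simpa [Function.comp_def] using this
  have hPW0 : Tendsto (fun l : ℝ => (Real.exp a * stdCdf (l + a / l)
      + Real.exp (-a) * stdCdf (l - a / l)) * Real.exp (-b / l ^ 2)) (𝓝[>] (0:ℝ)) (𝓝 0) := by
    apply squeeze_zero' (g := fun l : ℝ => (Real.exp a + Real.exp (-a)) * Real.exp (-b / l ^ 2))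
    · filter_upwards with u
      exact mul_nonneg (add_nonneg (mul_nonneg (Real.exp_pos _).le (stdCdf_nonneg _))
        (mul_nonneg (Real.exp_pos _).le (stdCdf_nonneg _))) (Real.exp_pos _).le
    · filter_upwards with u
      apply mul_le_mul_of_nonneg_right _ (Real.exp_pos _).le
      exact add_le_add (mul_le_of_le_one_right (Real.exp_pos _).le (stdCdf_le_one _))
        (mul_le_of_le_one_right (Real.exp_pos _).le (stdCdf_le_one _))
    · have := hW0.const_mul (Real.exp a + Real.exp (-a))
      rwa [mul_zero] at this
  have hG0 : Tendsto G (𝓝[>] (0:ℝ)) (𝓝 0) := by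
    rw [hG]
    have := (hPW0.sub ((hQ1.const_mul (Real.exp (-c))).sub
      (hQ2.const_mul (Real.exp c)))).const_mul (Real.exp (-s))
    simpa using this
  have h0 : Tendsto F (𝓝[>] (0:ℝ)) (𝓝 0) := by
    apply hG0.congr'
    filter_upwards [self_mem_nhdsWithin] with u hu
    rw [hFG u hu]
  have hcont : ContinuousWithinAt F (Ici (0:ℝ)) 0 := by
    rw [ContinuousWithinAt, show (Ici (0:ℝ)) = insert 0 (Ioi 0) from (Set.Ioi_insert (a := (0:ℝ))).symm,
      nhdsWithin_insert, Filter.tendsto_sup]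
    refine ⟨tendsto_pure_nhds F 0, ?_⟩
    rw [hF0]
    exact h0
  have hint := integral_Ioi_of_hasDerivAt_of_nonneg hcont hderiv hpos htopF
  rw [hF0, sub_zero] at hint
  exact hint.trans (by rw [← hxs, ← hys]; ring)
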